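/- Let J_n ∈ 𝒥_n with a_n ∈ ℝ. Then every eigenvalue of J_n is real, and the eigenvalues of J_n have multiplicity at most 2; moreover, any eigenvalue of J_n of multiplicity 2 (as a root of the characteristic polynomial) is also an eigenvalue of the leading principal (n−1)×(n−1) submatrix J_{n−1}. -/

import Mathlib

open Polynomial Matrix Finset

noncomputable section

/-- The corner-bordered complex Jacobi matrix of the class `𝒥_n`: real diagonal
entries `c 0, …, c (n−2)`, complex entry `a` at position `(n−1, n−1)`, superdiagonal
entries `b 0, …, b (n−2)` with their conjugates on the subdiagonal, and corner entries
`conj (b (n−1))` at `(0, n−1)` and `b (n−1)` at `(n−1, 0)`. -/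
def cornerJacobi (n : ℕ) (c : ℕ → ℝ) (b : ℕ → ℂ) (a : ℂ) :
    Matrix (Fin n) (Fin n) ℂ :=
  Matrix.of fun i j =>
    if (i : ℕ) = (j : ℕ) then (if (i : ℕ) = n - 1 then a else ((c (i : ℕ) : ℝ) : ℂ))
    else if (i : ℕ) = 0 ∧ (j : ℕ) = n - 1 then (starRingEnd ℂ) (b (n - 1))
    else if (i : ℕ) = n - 1 ∧ (j : ℕ) = 0 then b (n - 1)
    else if (i : ℕ) + 1 = (j : ℕ) then b (i : ℕ)
    else if (j : ℕ) + 1 = (i : ℕ) then (starRingEnd ℂ) (b (j : ℕ))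
    else 0

/-- The leading principal `(n−1)×(n−1)` submatrix of `cornerJacobi n c b a`. -/
def cornerJacobiSub (n : ℕ) (c : ℕ → ℝ) (b : ℕ → ℂ) (a : ℂ) :
    Matrix (Fin (n - 1)) (Fin (n - 1)) ℂ :=
  (cornerJacobi n c b a).submatrix (Fin.castLE (Nat.sub_le n 1)) (Fin.castLE (Nat.sub_le n 1))

variable {n : ℕ} {c : ℕ → ℝ} {b : ℕ → ℂ} {a : ℝ}

lemma cj_isHermitian (hn : 3 ≤ n) : (cornerJacobi n c b (a : ℂ)).IsHermitian := by
  unfold Matrix.IsHermitian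
  ext i j
  simp only [conjTranspose_apply, cornerJacobi, of_apply]
  split_ifs <;> first | (simp_all [Complex.conj_ofReal]; done) | omega | (exfalso; simp_all)

set_option maxRecDepth 100000 in
lemma cj_row0 (hn : 3 ≤ n) (x : Fin n → ℂ) :
    (cornerJacobi n c b (a : ℂ) *ᵥ x) ⟨0, by omega⟩ =
      (c 0 : ℂ) * x ⟨0, by omega⟩ + b 0 * x ⟨1, by omega⟩ +
        (starRingEnd ℂ) (b (n - 1)) * x ⟨n - 1, by omega⟩ := by
  have key : ∀ j : Fin n, cornerJacobi n c b (a : ℂ) ⟨0, by omega⟩ j * x j =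
      (if j = (⟨0, by omega⟩ : Fin n) then (c 0 : ℂ) * x ⟨0, by omega⟩ else 0)
      + (if j = (⟨1, by omega⟩ : Fin n) then b 0 * x ⟨1, by omega⟩ else 0)
      + (if j = (⟨n - 1, by omega⟩ : Fin n) then (starRingEnd ℂ) (b (n - 1)) * x ⟨n - 1, by omega⟩ else 0) := by
    rintro ⟨jv, hj⟩
    simp only [cornerJacobi, of_apply, Fin.val_mk, Fin.mk.injEq]
    split_ifs <;> first | (exfalso; omega) | (exfalso; simp only [true_and, false_and] at *; omega) | (subst_vars; simp only [zero_add, add_zero, zero_mul, mul_zero]; done) | (subst_vars; simp only [zero_add, add_zero]; rfl) | (exfalso; simp_all; done) | (subst_vars; ring) | (simp_all; done) | (simp_all; ring)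
  show ∑ j, cornerJacobi n c b (a : ℂ) ⟨0, by omega⟩ j * x j = _
  rw [Finset.sum_congr rfl fun j _ => key j]
  rw [Finset.sum_add_distrib, Finset.sum_add_distrib]
  simp only [Finset.sum_ite_eq', Finset.mem_univ, if_true]

set_option maxRecDepth 100000 in
lemma cj_rowmid (hn : 3 ≤ n) (x : Fin n → ℂ) (m : ℕ) (hm : m + 1 ≤ n - 2) :
    (cornerJacobi n c b (a : ℂ) *ᵥ x) ⟨m + 1, by omega⟩ =
      (starRingEnd ℂ) (b m) * x ⟨m, by omega⟩ + (c (m + 1) : ℂ) * x ⟨m + 1, by omega⟩ +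
        b (m + 1) * x ⟨m + 2, by omega⟩ := by
  have key : ∀ j : Fin n, cornerJacobi n c b (a : ℂ) ⟨m + 1, by omega⟩ j * x j =
      (if j = (⟨m, by omega⟩ : Fin n) then (starRingEnd ℂ) (b m) * x ⟨m, by omega⟩ else 0)
      + (if j = (⟨m + 1, by omega⟩ : Fin n) then (c (m + 1) : ℂ) * x ⟨m + 1, by omega⟩ else 0)
      + (if j = (⟨m + 2, by omega⟩ : Fin n) then b (m + 1) * x ⟨m + 2, by omega⟩ else 0) := by
    rintro ⟨jv, hj⟩
    simp only [cornerJacobi, of_apply, Fin.val_mk, Fin.mk.injEq]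
    split_ifs <;> first | (exfalso; omega) | (exfalso; simp only [true_and, false_and] at *; omega) | (subst_vars; simp only [zero_add, add_zero, zero_mul, mul_zero]; done) | (subst_vars; simp only [zero_add, add_zero]; rfl) | (exfalso; simp_all; done) | (subst_vars; ring) | (simp_all; done) | (simp_all; ring)
  show ∑ j, cornerJacobi n c b (a : ℂ) ⟨m + 1, by omega⟩ j * x j = _
  rw [Finset.sum_congr rfl fun j _ => key j]
  rw [Finset.sum_add_distrib, Finset.sum_add_distrib]
  simp only [Finset.sum_ite_eq', Finset.mem_univ, if_true]

lemma cj_key (hn : 3 ≤ n) (hb : ∀ k : ℕ, k < n → b k ≠ 0) (lam : ℂ) (x : Fin n → ℂ)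
    (hx : cornerJacobi n c b (a : ℂ) *ᵥ x = lam • x)
    (h0 : x ⟨0, by omega⟩ = 0) (h1 : x ⟨1, by omega⟩ = 0) : x = 0 := by
  have main : ∀ m, ∀ _h : m ≤ n - 2, x ⟨m, by omega⟩ = 0 := by
    intro m
    induction m using Nat.strong_induction_on with
    | _ m ih =>
      intro hm
      match m, ih, hm with
      | 0, _, _ => exact h0
      | 1, _, _ => exact h1
      | (k + 2), ih, hm =>
        have hrow := cj_rowmid (c := c) (b := b) (a := a) hn x k (by omega)
        rw [hx] at hrow
        have e1 : x ⟨k, by omega⟩ = 0 := ih k (by omega) (by omega)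
        have e2 : x ⟨k + 1, by omega⟩ = 0 := ih (k + 1) (by omega) (by omega)
        simp only [Pi.smul_apply, smul_eq_mul, e1, e2, mul_zero, zero_add, add_zero] at hrow
        rcases mul_eq_zero.mp hrow.symm with h | h
        · exact absurd h (hb (k + 1) (by omega))
        · exact h
  have hlast : x ⟨n - 1, by omega⟩ = 0 := by
    have hrow := cj_row0 (c := c) (b := b) (a := a) hn x
    rw [hx] at hrow
    simp only [Pi.smul_apply, smul_eq_mul, h0, h1, mul_zero, zero_add, add_zero] at hrow
    rcases mul_eq_zero.mp hrow.symm with h | h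
    · exact absurd h (by simpa using (hb (n - 1) (by omega)))
    · exact h
  funext k
  obtain ⟨kv, hk⟩ := k
  by_cases hkv : kv = n - 1
  · subst hkv; simpa using hlast
  · simpa using main kv (by omega)


section generic

lemma my_sum_split {M : Type*} [AddCommMonoid M] {k : ℕ} (f : Fin (k + 1) → M) :
    ∑ j, f j = (∑ j : Fin k, f (Fin.castLE (Nat.le_succ k) j)) + f ⟨k, Nat.lt_succ_self k⟩ := by
  rw [Fin.sum_univ_castSucc]
  rfl

lemma my_isRoot_charpoly_iff {k : ℕ} (M : Matrix (Fin k) (Fin k) ℂ) (lam : ℂ) :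
    M.charpoly.IsRoot lam ↔
      (lam • (1 : Matrix (Fin k) (Fin k) ℂ) - M).det = 0 := by
  have hmap : (charmatrix M).map (eval lam) = lam • (1 : Matrix (Fin k) (Fin k) ℂ) - M := by
    ext i j
    rcases eq_or_ne i j with h | h
    · subst h
      simp [charmatrix_apply_eq, Matrix.one_apply, Matrix.smul_apply]
    · simp [charmatrix_apply_ne _ _ _ h, Matrix.one_apply_ne h, Matrix.smul_apply]
  have : eval lam M.charpoly = ((charmatrix M).map (eval lam)).det := by
    rw [Matrix.charpoly]
    have := RingHom.map_det (evalRingHom lam) (charmatrix M)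
    simpa [coe_evalRingHom] using this
  rw [IsRoot, this, hmap]

end generic


lemma my_charpoly_conj {R : Type*} [CommRing R] {m : Type*} [Fintype m] [DecidableEq m]
    (P Q M : Matrix m m R) (h : P * Q = 1) : (P * M * Q).charpoly = M.charpoly := by
  have hPQ' : (C : R →+* R[X]).mapMatrix P * (C : R →+* R[X]).mapMatrix Q = 1 := by
    rw [← _root_.map_mul, h, _root_.map_one]
  have key : charmatrix (P * M * Q) =
      (C : R →+* R[X]).mapMatrix P * charmatrix M * (C : R →+* R[X]).mapMatrix Q := by
    unfold charmatrix
    rw [Matrix.mul_sub, Matrix.sub_mul, _root_.map_mul, _root_.map_mul]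
    congr 1
    have hs : (Matrix.scalar m (X : R[X])) = (X : R[X]) • (1 : Matrix m m R[X]) := by
      simp [Matrix.scalar, Matrix.smul_one_eq_diagonal]
    rw [hs, Matrix.mul_smul, Matrix.mul_one, Matrix.smul_mul, hPQ']
  rw [Matrix.charpoly, key, det_mul, det_mul, Matrix.charpoly]
  have : ((C : R →+* R[X]).mapMatrix P).det * ((C : R →+* R[X]).mapMatrix Q).det = 1 := by
    rw [← det_mul, hPQ', det_one]
  ring_nf
  calc ((C : R →+* R[X]).mapMatrix P).det * (charmatrix M).det * ((C : R →+* R[X]).mapMatrix Q).det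
      = (charmatrix M).det * (((C : R →+* R[X]).mapMatrix P).det * ((C : R →+* R[X]).mapMatrix Q).det) := by ring
    _ = (charmatrix M).det := by rw [this, mul_one]

lemma my_herm_charpoly {k : ℕ} {A : Matrix (Fin k) (Fin k) ℂ} (hA : A.IsHermitian) :
    A.charpoly = ∏ i, (X - Polynomial.C ((hA.eigenvalues i : ℝ) : ℂ)) := by
  have h1 : (hA.eigenvectorUnitary : Matrix (Fin k) (Fin k) ℂ) *
      (star (hA.eigenvectorUnitary : Matrix (Fin k) (Fin k) ℂ)) = 1 := by
    exact (Matrix.mem_unitaryGroup_iff).mp hA.eigenvectorUnitary.2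
  conv_lhs => rw [hA.spectral_theorem, Unitary.conjStarAlgAut_apply]
  rw [my_charpoly_conj _ _ _ h1, charpoly_of_upperTriangular _ (Matrix.blockTriangular_diagonal _)]
  simp [Function.comp]

lemma my_mult_eq_card {k : ℕ} {A : Matrix (Fin k) (Fin k) ℂ} (hA : A.IsHermitian) (lam : ℂ) :
    A.charpoly.rootMultiplicity lam =
      (univ.filter fun i => ((hA.eigenvalues i : ℝ) : ℂ) = lam).card := by
  classical
  rw [← Polynomial.count_roots, my_herm_charpoly hA]
  have h2 : (∏ i, (X - Polynomial.C ((hA.eigenvalues i : ℝ) : ℂ)))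
      = ((univ.val.map fun i => ((hA.eigenvalues i : ℝ) : ℂ)).map fun r => X - Polynomial.C r).prod := by
    simp [Finset.prod, Multiset.map_map, Function.comp_def]
  rw [h2, Polynomial.roots_multiset_prod_X_sub_C, Multiset.count_map]
  simp [Finset.card, Finset.filter, eq_comm]

lemma part3core (p : ℕ) (c : ℕ → ℝ) (b : ℕ → ℂ) (a : ℝ) (lam : ℂ) (x : Fin (p + 1) → ℂ)
    (hx : cornerJacobi (p + 1) c b (a : ℂ) *ᵥ x = lam • x)
    (hlast : x ⟨p, Nat.lt_succ_self p⟩ = 0) (hxne : x ≠ 0) :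
    (cornerJacobiSub (p + 1) c b (a : ℂ)).charpoly.IsRoot lam := by
  set A := cornerJacobi (p + 1) c b (a : ℂ) with hAdef
  let y : Fin (p + 1 - 1) → ℂ := fun i => x (Fin.castLE (Nat.sub_le (p + 1) 1) i)
  have hyne : y ≠ 0 := by
    intro h
    apply hxne
    funext k
    obtain ⟨kv, hk⟩ := k
    by_cases hkv : kv = p
    · subst hkv; exact hlast
    · have h2 : y ⟨kv, by omega⟩ = 0 := by rw [h]; rfl
      exact h2
  have hmul : cornerJacobiSub (p + 1) c b (a : ℂ) *ᵥ y = lam • y := by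
    funext i
    have hfull := congrFun hx (Fin.castLE (Nat.sub_le (p + 1) 1) i)
    have hsum : ∑ j : Fin (p + 1), A (Fin.castLE (Nat.sub_le (p + 1) 1) i) j * x j
        = lam * x (Fin.castLE (Nat.sub_le (p + 1) 1) i) := by
      simpa [Matrix.mulVec, dotProduct] using hfull
    rw [my_sum_split (fun j => A (Fin.castLE (Nat.sub_le (p + 1) 1) i) j * x j)] at hsum
    have hz : A (Fin.castLE (Nat.sub_le (p + 1) 1) i) ⟨p, Nat.lt_succ_self p⟩
        * x ⟨p, Nat.lt_succ_self p⟩ = 0 := by rw [hlast]; ring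
    rw [hz, add_zero] at hsum
    show ∑ j : Fin (p + 1 - 1),
        A (Fin.castLE (Nat.sub_le (p + 1) 1) i) (Fin.castLE (Nat.sub_le (p + 1) 1) j)
          * x (Fin.castLE (Nat.sub_le (p + 1) 1) j) = lam * y i
    exact hsum
  rw [my_isRoot_charpoly_iff, ← Matrix.exists_mulVec_eq_zero_iff]
  refine ⟨y, hyne, ?_⟩
  rw [Matrix.sub_mulVec, Matrix.smul_mulVec, Matrix.one_mulVec, hmul, sub_self]


/-- if `J_n ∈ 𝒥_n` has real `(n,n)` entry `a_n`, then all its eigenvalues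
are real, each of multiplicity at most `2`, and any eigenvalue of multiplicity `2` is
an eigenvalue of the leading principal submatrix `J_{n−1}`. -/
theorem stmt9 (n : ℕ) (hn : 3 ≤ n) (c : ℕ → ℝ) (b : ℕ → ℂ) (a : ℝ)
    (hb : ∀ k : ℕ, k < n → b k ≠ 0) :
    (∀ lam : ℂ, (cornerJacobi n c b (a : ℂ)).charpoly.IsRoot lam → lam.im = 0) ∧
    (∀ lam : ℂ, (cornerJacobi n c b (a : ℂ)).charpoly.rootMultiplicity lam ≤ 2) ∧
    (∀ lam : ℂ, (cornerJacobi n c b (a : ℂ)).charpoly.rootMultiplicity lam = 2 →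
      (cornerJacobiSub n c b (a : ℂ)).charpoly.IsRoot lam) := by
  classical
  have hA : (cornerJacobi n c b (a : ℂ)).IsHermitian := cj_isHermitian hn
  -- eigenvector facts
  have heig : ∀ (lam : ℂ) (i : Fin n), ((hA.eigenvalues i : ℝ) : ℂ) = lam →
      cornerJacobi n c b (a : ℂ) *ᵥ (hA.eigenvectorBasis i : Fin n → ℂ)
        = lam • (hA.eigenvectorBasis i : Fin n → ℂ) := by
    intro lam i hlam
    have h := hA.mulVec_eigenvectorBasis i
    funext k
    have hk := congrFun h k
    rw [← hlam]
    simpa [Complex.real_smul] using hk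
  -- card bound
  have hcard : ∀ lam : ℂ,
      (univ.filter fun i => ((hA.eigenvalues i : ℝ) : ℂ) = lam).card ≤ 2 := by
    intro lam
    set S := univ.filter fun i => ((hA.eigenvalues i : ℝ) : ℂ) = lam with hS
    let g : (Fin n → ℂ) →ₗ[ℂ] (Fin n → ℂ) :=
      Matrix.mulVecLin (cornerJacobi n c b (a : ℂ) - lam • (1 : Matrix (Fin n) (Fin n) ℂ))
    let V := LinearMap.ker g
    have hmem : ∀ v : Fin n → ℂ,
        v ∈ V ↔ cornerJacobi n c b (a : ℂ) *ᵥ v = lam • v := by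
      intro v
      simp only [V, g, LinearMap.mem_ker, Matrix.mulVecLin_apply, Matrix.sub_mulVec,
        Matrix.smul_mulVec, Matrix.one_mulVec, sub_eq_zero]
    -- family into V
    have hvmem : ∀ i : S, ((hA.eigenvectorBasis i.1 : Fin n → ℂ)) ∈ V := by
      intro i
      rw [hmem]
      exact heig lam i.1 ((Finset.mem_filter.mp i.2).2)
    let w : S → V := fun i => ⟨(hA.eigenvectorBasis i.1 : Fin n → ℂ), hvmem i⟩
    have li0 : LinearIndependent ℂ (fun i : Fin n => (hA.eigenvectorBasis i : Fin n → ℂ)) :=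
      hA.eigenvectorBasis.orthonormal.linearIndependent.map' (WithLp.linearEquiv 2 ℂ (Fin n → ℂ)).toLinearMap (LinearEquiv.ker _)
    have liw : LinearIndependent ℂ w := by
      apply LinearIndependent.of_comp V.subtype
      exact li0.comp (Subtype.val : S → Fin n) Subtype.val_injective
    have hfinV : Module.finrank ℂ V ≤ 2 := by
      let e : Fin 2 → Fin n := fun k => ⟨(k : ℕ), by omega⟩
      let T : V →ₗ[ℂ] (Fin 2 → ℂ) :=
        LinearMap.pi fun k => (LinearMap.proj (e k)).comp V.subtype
      have hTinj : Function.Injective T := by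
        rw [← LinearMap.ker_eq_bot, LinearMap.ker_eq_bot']
        rintro ⟨v, hv⟩ hT
        have h0 : v ⟨0, by omega⟩ = 0 := congrFun hT 0
        have h1 : v ⟨1, by omega⟩ = 0 := congrFun hT 1
        have : v = 0 := cj_key hn hb lam v ((hmem v).mp hv) h0 h1
        exact Subtype.ext this
      calc Module.finrank ℂ V ≤ Module.finrank ℂ (Fin 2 → ℂ) :=
            LinearMap.finrank_le_finrank_of_injective hTinj
        _ = 2 := Module.finrank_fin_fun ℂ
    calc S.card = Fintype.card S := (Fintype.card_coe S).symm
      _ ≤ Module.finrank ℂ V := liw.fintype_card_le_finrank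
      _ ≤ 2 := hfinV
  refine ⟨?_, ?_, ?_⟩
  · intro lam hroot
    rw [my_herm_charpoly hA] at hroot
    rw [IsRoot, eval_prod] at hroot
    obtain ⟨i, -, hi⟩ := Finset.prod_eq_zero_iff.mp hroot
    rw [eval_sub, eval_X, eval_C, sub_eq_zero] at hi
    rw [hi]
    simp
  · intro lam
    rw [my_mult_eq_card hA lam]
    exact hcard lam
  · intro lam h2
    rw [my_mult_eq_card hA lam] at h2
    obtain ⟨i, j, hij, hSij⟩ := Finset.card_eq_two.mp h2
    have hi : ((hA.eigenvalues i : ℝ) : ℂ) = lam := by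
      have hmem : i ∈ univ.filter fun k => ((hA.eigenvalues k : ℝ) : ℂ) = lam := by
        rw [hSij]; simp
      exact (Finset.mem_filter.mp hmem).2
    have hj : ((hA.eigenvalues j : ℝ) : ℂ) = lam := by
      have hmem : j ∈ univ.filter fun k => ((hA.eigenvalues k : ℝ) : ℂ) = lam := by
        rw [hSij]; simp
      exact (Finset.mem_filter.mp hmem).2
    have hu := heig lam i hi
    have hw := heig lam j hj
    have li0 : LinearIndependent ℂ (fun k : Fin n => (hA.eigenvectorBasis k : Fin n → ℂ)) :=
      hA.eigenvectorBasis.orthonormal.linearIndependent.map' (WithLp.linearEquiv 2 ℂ (Fin n → ℂ)).toLinearMap (LinearEquiv.ker _)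
    obtain ⟨p, rfl⟩ : ∃ p, n = p + 1 := ⟨n - 1, by omega⟩
    set u : Fin (p + 1) → ℂ := (hA.eigenvectorBasis i : Fin (p + 1) → ℂ) with hu_def
    set w : Fin (p + 1) → ℂ := (hA.eigenvectorBasis j : Fin (p + 1) → ℂ) with hw_def
    by_cases h0 : u ⟨p, Nat.lt_succ_self p⟩ = 0
    · refine part3core p c b a lam u hu h0 ?_
      intro hzero
      have := li0.ne_zero i
      exact this hzero
    · set x : Fin (p + 1) → ℂ := u ⟨p, Nat.lt_succ_self p⟩ • w - w ⟨p, Nat.lt_succ_self p⟩ • u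
        with hx_def
      have hxeig : cornerJacobi (p + 1) c b (a : ℂ) *ᵥ x = lam • x := by
        rw [hx_def, Matrix.mulVec_sub, Matrix.mulVec_smul, Matrix.mulVec_smul, hu, hw,
          smul_sub, smul_comm (u ⟨p, Nat.lt_succ_self p⟩) lam,
          smul_comm (w ⟨p, Nat.lt_succ_self p⟩) lam]
      have hxlast : x ⟨p, Nat.lt_succ_self p⟩ = 0 := by
        simp only [hx_def, Pi.sub_apply, Pi.smul_apply, smul_eq_mul]
        ring
      refine part3core p c b a lam x hxeig hxlast ?_
      intro hzero
      -- linear independence of the pair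
      let f : Fin 2 → Fin (p + 1) := ![i, j]
      have hfinj : Function.Injective f := by
        intro s t hst
        fin_cases s <;> fin_cases t <;> simp_all [f]
      have lip : LinearIndependent ℂ
          (fun k : Fin 2 => (hA.eigenvectorBasis (f k) : Fin (p + 1) → ℂ)) :=
        li0.comp f hfinj
      have := Fintype.linearIndependent_iff.mp lip
        ![-(w ⟨p, Nat.lt_succ_self p⟩), u ⟨p, Nat.lt_succ_self p⟩] ?_ 1
      · simp at this
        exact h0 this
      · rw [Fin.sum_univ_two]
        simp only [Matrix.cons_val_zero, Matrix.cons_val_one, Matrix.head_cons]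
        have : -(w ⟨p, Nat.lt_succ_self p⟩) • u + u ⟨p, Nat.lt_succ_self p⟩ • w = 0 := by
          rw [← hzero, hx_def]; module
        simpa [f] using this
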